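/- With $w_\varepsilon$ as above ($w_\varepsilon(x)=1-|x|$ for $\varepsilon<|x|\le1$ and $1-\frac\varepsilon2-\frac{|x|^2}{2\varepsilon}$ for $|x|\le\varepsilon$), the coarea-type quantity $\int_0^{\sup w_\varepsilon}\|\Delta_\infty^N w_\varepsilon\|_{L^\infty(\{w_\varepsilon=r\})}\,dr$ equals $\frac{1}{\varepsilon}\cdot\frac{\varepsilon}{2}=\frac12$ plus $0$ from the cone part, hence is bounded by $1$ uniformly in $\varepsilon$, whereas $\|\Delta_\infty^N w_\varepsilon\|_{L^\infty(B_1(0))}=\frac1\varepsilon\to\infty$. -/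

import Mathlib

open RealInnerProductSpace MeasureTheory

variable {E : Type*} [NormedAddCommGroup E] [InnerProductSpace ℝ E] [CompleteSpace E]

lemma norm_inv_smul_self {E : Type*} [NormedAddCommGroup E] [NormedSpace ℝ E] {x : E} (hx : x ≠ 0) :
    ‖‖x‖⁻¹ • x‖ = 1 := by
  rw [norm_smul, norm_inv, norm_norm, inv_mul_cancel₀ (norm_ne_zero_iff.mpr hx)]

lemma grad_inner_self (y : E) : HasGradientAt (fun z : E => ⟪z, z⟫) ((2:ℝ) • y) y := by
  rw [hasGradientAt_iff_hasFDerivAt]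
  have h := (hasFDerivAt_id y).inner ℝ (hasFDerivAt_id y)
  refine h.congr_fderiv ?_
  ext v
  simp [fderivInnerCLM_apply, real_inner_comm, two_smul, InnerProductSpace.toDual_apply_apply,
    inner_add_left, inner_smul_left]

lemma grad_one_sub_norm (y : E) (hy : y ≠ 0) :
    HasGradientAt (fun z : E => 1 - ‖z‖) (-(‖y‖⁻¹ • y)) y := by
  have hsq : ∀ z : E, ‖z‖ = Real.sqrt ⟪z, z⟫ := by
    intro z
    rw [real_inner_self_eq_norm_sq, Real.sqrt_sq (norm_nonneg z)]
  have hpos : (0:ℝ) < ⟪y, y⟫ := by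
    rw [real_inner_self_eq_norm_sq]
    have : ‖y‖ ≠ 0 := norm_ne_zero_iff.mpr hy
    positivity
  have hsqrt := Real.hasDerivAt_sqrt hpos.ne'
  have hin := (grad_inner_self y).hasFDerivAt
  have hcomp : HasFDerivAt (fun z : E => Real.sqrt ⟪z, z⟫)
      ((1 / (2 * Real.sqrt ⟪y, y⟫)) • (InnerProductSpace.toDual ℝ E ((2:ℝ) • y))) y :=
    HasDerivAt.comp_hasFDerivAt (f := fun z : E => ⟪z, z⟫) y hsqrt hin
  rw [hasGradientAt_iff_hasFDerivAt]
  have h2 : HasFDerivAt (fun z : E => 1 - ‖z‖)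
      (-((1 / (2 * Real.sqrt ⟪y, y⟫)) • (InnerProductSpace.toDual ℝ E ((2:ℝ) • y)))) y := by
    have := hcomp.const_sub 1
    simpa only [← hsq] using this
  refine h2.congr_fderiv ?_
  ext v
  have hnorm : Real.sqrt ⟪y, y⟫ = ‖y‖ := (hsq y).symm
  have h0 : ‖y‖ ≠ 0 := norm_ne_zero_iff.mpr hy
  simp only [InnerProductSpace.toDual_apply_apply, ContinuousLinearMap.neg_apply,
    ContinuousLinearMap.smul_apply, hnorm, inner_neg_left, inner_smul_left,
    RCLike.conj_to_real, conj_trivial]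
  field_simp
  simp only [smul_eq_mul]; field_simp

section W

variable {ε : ℝ} (hε : ε ∈ Set.Ioo (0:ℝ) 1) {w : E → ℝ}
  (hw : ∀ x : E, w x = if ‖x‖ ≤ ε then 1 - ε / 2 - ‖x‖ ^ 2 / (2 * ε) else 1 - ‖x‖)

include hε hw

lemma grad_w_in : ∀ y : E, ‖y‖ < ε → HasGradientAt w (-(ε⁻¹ • y)) y := by
  intro y hy
  have hεpos : (0:ℝ) < ε := hε.1
  -- the model function
  have hmodel : HasGradientAt (fun z : E => 1 - ε/2 - ⟪z, z⟫ / (2*ε)) (-(ε⁻¹ • y)) y := by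
    rw [hasGradientAt_iff_hasFDerivAt]
    have h1 := (grad_inner_self y).hasFDerivAt
    have h2 : HasFDerivAt (fun z : E => ⟪z, z⟫ / (2*ε))
        ((2*ε)⁻¹ • (InnerProductSpace.toDual ℝ E ((2:ℝ) • y))) y := by
      simpa [div_eq_inv_mul, mul_comm] using h1.const_mul ((2*ε)⁻¹)
    have h3 := h2.const_sub (1 - ε/2)
    refine h3.congr_fderiv ?_
    ext v
    simp only [InnerProductSpace.toDual_apply_apply, ContinuousLinearMap.neg_apply,
      ContinuousLinearMap.smul_apply, inner_neg_left, inner_smul_left,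
      conj_trivial]
    field_simp
    simp only [smul_eq_mul]; field_simp
  have hev : w =ᶠ[nhds y] (fun z : E => 1 - ε/2 - ⟪z, z⟫ / (2*ε)) := by
    filter_upwards [Metric.ball_mem_nhds y (by linarith : (0:ℝ) < ε - ‖y‖)] with z hz
    have hzn : ‖z‖ ≤ ε := by
      have h4 : ‖z - y‖ < ε - ‖y‖ := by simpa [dist_eq_norm] using hz
      have h5 : ‖z‖ - ‖y‖ ≤ ‖z - y‖ := norm_sub_norm_le z y
      linarith
    rw [hw z, if_pos hzn, real_inner_self_eq_norm_sq]
  exact hmodel.congr_of_eventuallyEq hev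

lemma grad_w_out : ∀ y : E, ε < ‖y‖ → HasGradientAt w (-(‖y‖⁻¹ • y)) y := by
  intro y hy
  have hy0 : y ≠ 0 := by
    intro h; rw [h, norm_zero] at hy; exact absurd hε.1 (not_lt.mpr hy.le)
  have hmodel := grad_one_sub_norm y hy0
  have hev : w =ᶠ[nhds y] (fun z : E => 1 - ‖z‖) := by
    have hopen : IsOpen {z : E | ε < ‖z‖} := isOpen_lt continuous_const continuous_norm
    filter_upwards [hopen.mem_nhds hy] with z hz
    rw [hw z, if_neg (not_le.mpr hz)]
  exact hmodel.congr_of_eventuallyEq hev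

end W
section Delta
open RealInnerProductSpace
variable {E : Type*} [NormedAddCommGroup E] [InnerProductSpace ℝ E] [CompleteSpace E]
variable {ε : ℝ} (hε : ε ∈ Set.Ioo (0:ℝ) 1) {w : E → ℝ}
  (hw : ∀ x : E, w x = if ‖x‖ ≤ ε then 1 - ε / 2 - ‖x‖ ^ 2 / (2 * ε) else 1 - ‖x‖)
  {Δ : E → ℝ}
  (hΔ : ∀ x, Δ x = ⟪(fderiv ℝ (gradient w) x) (‖gradient w x‖⁻¹ • gradient w x),
      ‖gradient w x‖⁻¹ • gradient w x⟫)

include hε hw hΔ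

lemma Δ_zero : Δ 0 = 0 := by
  have h0 : gradient w 0 = 0 := by
    simpa using (grad_w_in hε hw 0 (by simpa using hε.1)).gradient
  rw [hΔ 0, h0]
  simp

lemma Δ_in : ∀ x : E, 0 < ‖x‖ → ‖x‖ < ε → Δ x = -ε⁻¹ := by
  intro x hx0 hxε
  have hεpos := hε.1
  have hx0' : x ≠ 0 := norm_pos_iff.mp hx0
  have hev : gradient w =ᶠ[nhds x] (fun y : E => (-ε⁻¹ : ℝ) • y) := by
    filter_upwards [Metric.ball_mem_nhds x (by linarith : (0:ℝ) < ε - ‖x‖)] with z hz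
    have h4 : ‖z - x‖ < ε - ‖x‖ := by simpa [dist_eq_norm] using hz
    have h5 : ‖z‖ - ‖x‖ ≤ ‖z - x‖ := norm_sub_norm_le z x
    have : ‖z‖ < ε := by linarith
    rw [(grad_w_in hε hw z this).gradient, neg_smul]
  have hf : fderiv ℝ (gradient w) x = (-ε⁻¹ : ℝ) • ContinuousLinearMap.id ℝ E := by
    rw [hev.fderiv_eq]
    exact (((-ε⁻¹ : ℝ) • ContinuousLinearMap.id ℝ E).hasFDerivAt).fderiv
  have hgx : gradient w x = (-ε⁻¹ : ℝ) • x := by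
    rw [(grad_w_in hε hw x hxε).gradient, neg_smul]
  have hgx0 : gradient w x ≠ 0 := by
    rw [hgx]
    simp only [ne_eq, smul_eq_zero, not_or]
    exact ⟨by simp [neg_eq_zero]; positivity, hx0'⟩
  have hu : ‖(‖gradient w x‖⁻¹ • gradient w x)‖ = 1 := norm_inv_smul_self hgx0
  rw [hΔ x, hf]
  set u := ‖gradient w x‖⁻¹ • gradient w x with hudef
  have : ⟪(-ε⁻¹ : ℝ) • u, u⟫ = -ε⁻¹ * ‖u‖^2 := by
    rw [real_inner_smul_left, real_inner_self_eq_norm_sq]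
  simpa [hu] using this

lemma Δ_out : ∀ x : E, ε < ‖x‖ → Δ x = 0 := by
  intro x hxε
  have hεpos := hε.1
  have hx0 : x ≠ 0 := by
    intro h; rw [h, norm_zero] at hxε; linarith
  set φ : E → E := fun y => ‖y‖⁻¹ • y with hφdef
  have hφd : DifferentiableAt ℝ φ x := by
    exact ((differentiableAt_id.norm ℝ hx0).inv (norm_ne_zero_iff.mpr hx0)).smul
      differentiableAt_id
  set D := fderiv ℝ φ x with hDdef
  have hopen : IsOpen {z : E | ε < ‖z‖} := isOpen_lt continuous_const continuous_norm
  have hev : gradient w =ᶠ[nhds x] (fun y : E => -(φ y)) := by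
    filter_upwards [hopen.mem_nhds hxε] with z hz
    rw [(grad_w_out hε hw z hz).gradient]
  have hf : fderiv ℝ (gradient w) x = -D := by
    rw [hev.fderiv_eq, fderiv_fun_neg]
  -- key orthogonality
  have hkey : ∀ v : E, ⟪D v, φ x⟫ = 0 := by
    intro v
    have hFd := (hφd.hasFDerivAt.inner ℝ hφd.hasFDerivAt)
    have hFev : (fun y : E => ⟪φ y, φ y⟫) =ᶠ[nhds x] (fun _ => (1:ℝ)) := by
      have hopen2 : IsOpen {z : E | z ≠ 0} := isOpen_compl_singleton
      filter_upwards [hopen2.mem_nhds hx0] with z hz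
      have : ‖φ z‖ = 1 := norm_inv_smul_self hz
      rw [real_inner_self_eq_norm_sq, this]; norm_num
    have h1 : fderiv ℝ (fun y : E => ⟪φ y, φ y⟫) x = 0 := by
      rw [hFev.fderiv_eq]; exact fderiv_const_apply 1
    have h2 := hFd.fderiv
    rw [h1] at h2
    have h3 := DFunLike.congr_fun h2.symm v
    simp only [ContinuousLinearMap.zero_apply, ContinuousLinearMap.comp_apply,
      ContinuousLinearMap.prod_apply, fderivInnerCLM_apply] at h3
    have h4 : ⟪φ x, D v⟫ + ⟪D v, φ x⟫ = 0 := h3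
    rw [real_inner_comm (φ x) (D v)] at h4
    linarith
  have hgx : gradient w x = -(φ x) := (grad_w_out hε hw x hxε).gradient
  have hφn : ‖φ x‖ = 1 := norm_inv_smul_self hx0
  have hun : ‖gradient w x‖ = 1 := by rw [hgx, norm_neg, hφn]
  have huu : ‖gradient w x‖⁻¹ • gradient w x = -(φ x) := by rw [hun, hgx]; simp
  rw [hΔ x, hf, huu]
  have := hkey (φ x)
  simp only [ContinuousLinearMap.neg_apply, map_neg, neg_neg, inner_neg_right, inner_neg_left]
  simp [this]

lemma Δ_sphere : ∀ x : E, ‖x‖ = ε → Δ x = 0 := by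
  intro x hxε
  have hεpos := hε.1
  have hx0 : x ≠ 0 := by intro h; rw [h, norm_zero] at hxε; linarith
  have hadd : ∀ t : ℝ, x + t • x = (1 + t) • x := by
    intro t; rw [add_smul, one_smul]
  have hnorm : ∀ t : ℝ, -1 < t → ‖x + t • x‖ = (1 + t) * ε := by
    intro t ht
    rw [hadd t, norm_smul, Real.norm_eq_abs, abs_of_pos (by linarith), hxε]
  have hright : ∀ t : ℝ, 0 < t → gradient w (x + t • x) = -(ε⁻¹ • x) := by
    intro t ht
    have h1 : ε < ‖x + t • x‖ := by
      rw [hnorm t (by linarith)]; nlinarith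
    rw [(grad_w_out hε hw _ h1).gradient, hnorm t (by linarith), hadd t, smul_smul]
    congr 1
    have h2 : ((1 + t) * ε)⁻¹ * (1 + t) = ε⁻¹ := by
      rw [mul_inv]; field_simp
    rw [h2]
  have hleft : ∀ t : ℝ, -1 < t → t < 0 → gradient w (x + t • x) = -(ε⁻¹ • ((1 + t) • x)) := by
    intro t ht1 ht2
    have h1 : ‖x + t • x‖ < ε := by
      rw [hnorm t ht1]; nlinarith
    rw [(grad_w_in hε hw _ h1).gradient, hadd t]
  have hnd : ¬ DifferentiableAt ℝ (gradient w) x := by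
    intro hd
    set A := fderiv ℝ (gradient w) x with hA
    have hγ : HasDerivAt (fun t : ℝ => x + t • x) x 0 := by
      have h1 : HasDerivAt (fun t : ℝ => t • x) ((1 : ℝ) • x) 0 := (hasDerivAt_id 0).smul_const x
      simpa using h1.const_add x
    have h0x : x + (0 : ℝ) • x = x := by simp
    have hfd : HasFDerivAt (gradient w) A (x + (0 : ℝ) • x) := by
      rw [h0x]; exact hd.hasFDerivAt
    have hh : HasDerivAt (fun t : ℝ => gradient w (x + t • x)) (A x) 0 :=
      by have := hfd.comp_hasDerivAt 0 hγ; exact this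
    -- value of the gradient at x via continuity from the right
    have hgx : gradient w x = -(ε⁻¹ • x) := by
      have hc : ContinuousAt (gradient w) x := hd.continuousAt
      have hγc : ContinuousAt (fun t : ℝ => x + t • x) 0 :=
        (continuous_const.add (continuous_id.smul continuous_const)).continuousAt
      have htend : Filter.Tendsto (fun t : ℝ => gradient w (x + t • x)) (nhds 0)
          (nhds (gradient w x)) := by
        have h1 : Filter.Tendsto (fun t : ℝ => x + t • x) (nhds 0) (nhds x) := by
          have := hγ.continuousAt.tendsto
          simpa using this
        exact hc.tendsto.comp h1
      have htend2 : Filter.Tendsto (fun t : ℝ => gradient w (x + t • x))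
          (nhdsWithin 0 (Set.Ioi 0)) (nhds (gradient w x)) := htend.mono_left nhdsWithin_le_nhds
      have htend3 : Filter.Tendsto (fun t : ℝ => gradient w (x + t • x))
          (nhdsWithin 0 (Set.Ioi 0)) (nhds (-(ε⁻¹ • x))) := by
        apply Filter.Tendsto.congr' _ tendsto_const_nhds
        filter_upwards [self_mem_nhdsWithin] with t ht
        exact (hright t ht).symm
      exact tendsto_nhds_unique htend2 htend3
    have hR : HasDerivWithinAt (fun t : ℝ => gradient w (x + t • x)) 0 (Set.Ici 0) 0 := by
      apply (hasDerivWithinAt_const (0:ℝ) (Set.Ici 0) (-(ε⁻¹ • x))).congr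
      · intro t ht
        rcases eq_or_lt_of_le (Set.mem_Ici.mp ht) with h | h
        · rw [← h]; simpa using hgx
        · exact hright t h
      · simpa using hgx
    have hL : HasDerivWithinAt (fun t : ℝ => gradient w (x + t • x)) (-(ε⁻¹ • x))
        (Set.Iic 0) 0 := by
      have hℓ : HasDerivAt (fun t : ℝ => -(ε⁻¹ • x) + t • (-(ε⁻¹ • x))) (-(ε⁻¹ • x)) 0 := by
        have h1 : HasDerivAt (fun t : ℝ => t • (-(ε⁻¹ • x))) ((1 : ℝ) • (-(ε⁻¹ • x))) 0 :=
          (hasDerivAt_id 0).smul_const _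
        simpa using h1.const_add (-(ε⁻¹ • x))
      apply hℓ.hasDerivWithinAt.congr_of_eventuallyEq
      · filter_upwards [self_mem_nhdsWithin,
          mem_nhdsWithin_of_mem_nhds (Ioi_mem_nhds (show (-1:ℝ) < 0 by norm_num))] with t ht1 ht2
        rcases eq_or_lt_of_le (Set.mem_Iic.mp ht1) with h | h
        · rw [h]; simpa using hgx
        · rw [hleft t ht2 h]
          rw [add_smul, one_smul, smul_add, neg_add, smul_comm, smul_neg]
      · simpa using hgx
    have e1 : (0 : E) = A x :=
      (uniqueDiffOn_Ici (0:ℝ) 0 Set.self_mem_Ici).eq_deriv _ hR hh.hasDerivWithinAt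
    have e2 : -(ε⁻¹ • x) = A x :=
      (uniqueDiffOn_Iic (0:ℝ) 0 Set.self_mem_Iic).eq_deriv _ hL hh.hasDerivWithinAt
    have e3 : -(ε⁻¹ • x) = 0 := by rw [e2, ← e1]
    have e4 : ε⁻¹ • x = 0 := by simpa using e3
    rcases smul_eq_zero.mp e4 with h | h
    · exact absurd h (inv_ne_zero hεpos.ne')
    · exact hx0 h
  rw [hΔ x, fderiv_zero_of_not_differentiableAt hnd]
  simp

end Delta
set_option maxHeartbeats 1000000

/-- The level-set ABP quantity for `w_ε` stays bounded (by `1`) as `ε → 0⁺`,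
whereas the plain `L^∞` norm of `Δ_∞^N w_ε` on the unit ball equals `1/ε`, which
blows up as `ε → 0⁺`. -/
theorem stmt8 (n : ℕ) (hn : 2 ≤ n) (ε : ℝ) (hε : ε ∈ Set.Ioo (0 : ℝ) 1)
    (w : EuclideanSpace ℝ (Fin n) → ℝ)
    (hw : ∀ x, w x = if ‖x‖ ≤ ε then 1 - ε / 2 - ‖x‖ ^ 2 / (2 * ε) else 1 - ‖x‖)
    (Δ : EuclideanSpace ℝ (Fin n) → ℝ)
    (hΔ : ∀ x, Δ x = ⟪(fderiv ℝ (gradient w) x) (‖gradient w x‖⁻¹ • gradient w x),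
        ‖gradient w x‖⁻¹ • gradient w x⟫) :
    (∫ r in (0 : ℝ)..(1 - ε / 2),
        sSup ((fun x => |Δ x|) ''
          {x | x ∈ Metric.ball (0 : EuclideanSpace ℝ (Fin n)) 1 ∧ w x = r})) ≤ 1 ∧
    sSup ((fun x => |Δ x|) '' Metric.ball (0 : EuclideanSpace ℝ (Fin n)) 1) = 1 / ε ∧
    Filter.Tendsto (fun e : ℝ => 1 / e) (nhdsWithin 0 (Set.Ioi 0)) Filter.atTop := by
  obtain ⟨hε0, hε1⟩ := hε
  have hεI : ε ∈ Set.Ioo (0:ℝ) 1 := ⟨hε0, hε1⟩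
  have hinv : (0:ℝ) < ε⁻¹ := inv_pos.mpr hε0
  -- a unit vector
  have hpos : 0 < n := by omega
  set e : EuclideanSpace ℝ (Fin n) := EuclideanSpace.single ⟨0, hpos⟩ (1:ℝ) with he_def
  have he : ‖e‖ = 1 := by rw [he_def, EuclideanSpace.norm_single]; norm_num
  -- |Δ| values
  have habs_in : ∀ x : EuclideanSpace ℝ (Fin n), 0 < ‖x‖ → ‖x‖ < ε → |Δ x| = ε⁻¹ := by
    intro x h1 h2
    rw [Δ_in hεI hw hΔ x h1 h2, abs_neg, abs_of_pos hinv]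
  have hsub0 : ∀ s : Set ℝ, s ⊆ {0} → sSup s = 0 := by
    intro s hs
    rcases Set.subset_singleton_iff_eq.mp hs with h | h
    · rw [h]; exact Real.sSup_empty
    · rw [h]; exact csSup_singleton 0
  refine ⟨?_, ?_, by simpa [one_div] using tendsto_inv_nhdsGT_zero⟩
  · -- the integral bound
    have hEq : Set.EqOn
        (fun r => sSup ((fun x => |Δ x|) ''
          {x | x ∈ Metric.ball (0 : EuclideanSpace ℝ (Fin n)) 1 ∧ w x = r}))
        (Set.indicator (Set.Ioo (1-ε) (1-ε/2)) (fun _ => ε⁻¹))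
        (Set.uIcc 0 (1 - ε/2)) := by
      intro r hr
      rw [Set.uIcc_of_le (by linarith)] at hr
      obtain ⟨hr0, hr1⟩ := hr
      simp only
      by_cases hcase : r ≤ 1 - ε
      · rw [Set.indicator_of_notMem
          (by simp only [Set.mem_Ioo, not_and_or, not_lt]; exact Or.inl hcase)]
        apply hsub0
        rintro z ⟨x, ⟨hx1, hx2⟩, rfl⟩
        simp only [Set.mem_singleton_iff]
        rcases le_or_gt ‖x‖ ε with hle | hgt
        · have hwx : w x = 1 - ε/2 - ‖x‖^2/(2*ε) := by rw [hw x, if_pos hle]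
          have h3 : 1 - ε/2 - ‖x‖^2/(2*ε) ≤ 1 - ε := by rw [← hwx, hx2]; exact hcase
          have h4 : ε^2 ≤ ‖x‖^2 := by
            have h5 : ε/2 ≤ ‖x‖^2/(2*ε) := by linarith
            have h2ε : (0:ℝ) < 2*ε := by linarith
            rw [le_div_iff₀ h2ε] at h5
            nlinarith
          have h6 : ε ≤ ‖x‖ := by nlinarith [norm_nonneg x]
          have h7 : ‖x‖ = ε := le_antisymm hle h6
          rw [Δ_sphere hεI hw hΔ x h7, abs_zero]
        · rw [Δ_out hεI hw hΔ x hgt, abs_zero]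
      · push_neg at hcase
        by_cases hcase2 : r = 1 - ε/2
        · rw [Set.indicator_of_notMem (by simp [Set.mem_Ioo, hcase2])]
          apply hsub0
          rintro z ⟨x, ⟨hx1, hx2⟩, rfl⟩
          simp only [Set.mem_singleton_iff]
          have hle : ‖x‖ ≤ ε := by
            by_contra hgt
            push_neg at hgt
            have : w x = 1 - ‖x‖ := by rw [hw x, if_neg (not_le.mpr hgt)]
            rw [hx2, hcase2] at this
            linarith
          have hwx : w x = 1 - ε/2 - ‖x‖^2/(2*ε) := by rw [hw x, if_pos hle]
          have h3 : ‖x‖^2/(2*ε) = 0 := by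
            rw [hx2, hcase2] at hwx; linarith
          have h4 : ‖x‖ = 0 := by
            have := norm_nonneg x
            by_contra h5
            have h6 : 0 < ‖x‖ := lt_of_le_of_ne this (Ne.symm h5)
            have : 0 < ‖x‖^2/(2*ε) := by positivity
            linarith
          have hx0 : x = 0 := norm_eq_zero.mp h4
          rw [hx0, Δ_zero hεI hw hΔ, abs_zero]
        · have hr2 : r < 1 - ε/2 := lt_of_le_of_ne hr1 hcase2
          rw [Set.indicator_of_mem (Set.mem_Ioo.mpr ⟨hcase, hr2⟩)]
          have himg : (fun x => |Δ x|) ''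
              {x | x ∈ Metric.ball (0 : EuclideanSpace ℝ (Fin n)) 1 ∧ w x = r} = {ε⁻¹} := by
            ext z
            simp only [Set.mem_image, Set.mem_setOf_eq, Set.mem_singleton_iff]
            constructor
            · rintro ⟨x, ⟨hx1, hx2⟩, rfl⟩
              have hle : ‖x‖ ≤ ε := by
                by_contra hgt
                push_neg at hgt
                have : w x = 1 - ‖x‖ := by rw [hw x, if_neg (not_le.mpr hgt)]
                rw [hx2] at this
                linarith
              have hwx : w x = 1 - ε/2 - ‖x‖^2/(2*ε) := by rw [hw x, if_pos hle]
              have h5 : 1 - ε/2 - ‖x‖^2/(2*ε) = r := by rw [← hwx, hx2]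
              have hsq : ‖x‖^2 = 2*ε*(1 - ε/2 - r) := by field_simp at h5 ⊢; linarith
              have hlt : ‖x‖ < ε := by nlinarith [norm_nonneg x]
              have hxpos : 0 < ‖x‖ := by nlinarith [norm_nonneg x]
              exact habs_in x hxpos hlt
            · rintro rfl
              set c := Real.sqrt (2*ε*(1 - ε/2 - r)) with hc_def
              have hcarg : 0 < 2*ε*(1 - ε/2 - r) := by nlinarith
              have hc2 : c^2 = 2*ε*(1 - ε/2 - r) := Real.sq_sqrt hcarg.le
              have hc0 : 0 < c := Real.sqrt_pos.mpr hcarg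
              have hcε : c < ε := by nlinarith
              refine ⟨c • e, ⟨?_, ?_⟩, ?_⟩
              · rw [mem_ball_zero_iff, norm_smul, he, mul_one, Real.norm_eq_abs,
                  abs_of_pos hc0]
                linarith
              · have hnc : ‖c • e‖ = c := by
                  rw [norm_smul, he, mul_one, Real.norm_eq_abs, abs_of_pos hc0]
                rw [hw _, hnc, if_pos hcε.le, hc2]
                field_simp
                ring
              · have hnc : ‖c • e‖ = c := by
                  rw [norm_smul, he, mul_one, Real.norm_eq_abs, abs_of_pos hc0]
                rw [habs_in _ (by rw [hnc]; exact hc0) (by rw [hnc]; exact hcε)]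
          rw [himg, csSup_singleton]
    calc (∫ r in (0:ℝ)..(1 - ε/2),
            sSup ((fun x => |Δ x|) ''
              {x | x ∈ Metric.ball (0 : EuclideanSpace ℝ (Fin n)) 1 ∧ w x = r}))
        = ∫ r in (0:ℝ)..(1 - ε/2),
            Set.indicator (Set.Ioo (1-ε) (1-ε/2)) (fun _ => ε⁻¹) r :=
          intervalIntegral.integral_congr hEq
      _ = ∫ r in Set.Ioc (0:ℝ) (1 - ε/2),
            Set.indicator (Set.Ioo (1-ε) (1-ε/2)) (fun _ => ε⁻¹) r :=
          intervalIntegral.integral_of_le (by linarith)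
      _ = ∫ r in Set.Ioc (0:ℝ) (1 - ε/2) ∩ Set.Ioo (1-ε) (1-ε/2), (ε⁻¹ : ℝ) :=
          setIntegral_indicator measurableSet_Ioo
      _ = ∫ r in Set.Ioo (1-ε) (1-ε/2), (ε⁻¹ : ℝ) := by
          rw [Set.inter_eq_self_of_subset_right]
          intro t ht
          exact ⟨by linarith [ht.1], le_of_lt ht.2⟩
      _ = (volume (Set.Ioo (1-ε) (1-ε/2))).toReal • (ε⁻¹ : ℝ) := setIntegral_const _
      _ ≤ 1 := by
          rw [Real.volume_Ioo, ENNReal.toReal_ofReal (by linarith), smul_eq_mul]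
          have h9 : (1 - ε/2 - (1 - ε)) * ε⁻¹ = 1/2 := by field_simp; ring
          rw [h9]; norm_num
  · -- sSup over the ball
    have hgreat : IsGreatest ((fun x => |Δ x|) '' Metric.ball (0 : EuclideanSpace ℝ (Fin n)) 1)
        ε⁻¹ := by
      constructor
      · refine ⟨(ε/2) • e, ?_, ?_⟩
        · rw [mem_ball_zero_iff, norm_smul, he, mul_one, Real.norm_eq_abs,
            abs_of_pos (by linarith)]
          linarith
        · have hnc : ‖(ε/2) • e‖ = ε/2 := by
            rw [norm_smul, he, mul_one, Real.norm_eq_abs, abs_of_pos (by linarith)]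
          exact habs_in _ (by rw [hnc]; linarith) (by rw [hnc]; linarith)
      · rintro z ⟨x, hx, rfl⟩
        simp only
        rcases lt_trichotomy ‖x‖ ε with h | h | h
        · rcases eq_or_lt_of_le (norm_nonneg x) with h2 | h2
          · have hx0 : x = 0 := norm_eq_zero.mp h2.symm
            rw [hx0, Δ_zero hεI hw hΔ, abs_zero]
            exact hinv.le
          · rw [habs_in x h2 h]
        · rw [Δ_sphere hεI hw hΔ x h, abs_zero]
          exact hinv.le
        · rw [Δ_out hεI hw hΔ x h, abs_zero]
          exact hinv.le
    rw [hgreat.csSup_eq, one_div]
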